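/- Intermediate step in the proof of the second RP theorem: suppose H ∈ hom(𝓗₋₊) decomposes as H = H₋ + H₀ + H₊ + λI where λ ∈ ℝ, H₊ = I₋ ⊗ H'₊ for some H'₊ ∈ hom(𝓗₊), H₋ = θ(H₊) := θ H₊ θ, and 𝔉ₛ(-H₀) ≥ 0. Then for every s > 0, the operator H - s·θ(H₊)H₊ has the reflection-positivity property: ⟨θ(x') ⊗ x', e^{-βH + sβ·θ(H₊)H₊}(θ(x) ⊗ x)⟩_{𝓗₋₊} ≥ 0 for all x, x' ∈ 𝓗₊ and all β ≥ 0. -/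

import Mathlib

open scoped ComplexInnerProductSpace ComplexOrder

private lemma quad_rewrite {m : Type} [Fintype m] (M : Matrix m m ℂ) (z : m → ℂ) :
    dotProduct (star z) (M.mulVec z)
      = ∑ p, ∑ q, (starRingEnd ℂ) (z p) * M p q * z q := by
  simp only [dotProduct, Matrix.mulVec, Pi.star_apply, Finset.mul_sum]
  exact Finset.sum_congr rfl fun p _ => Finset.sum_congr rfl fun q _ => by
    rw [starRingEnd_apply]; ring

private lemma posSemidef_of_quadform {m : Type} [Fintype m] [DecidableEq m]
    (M : Matrix m m ℂ)
    (h : ∀ z : m → ℂ, 0 ≤ dotProduct (star z) (M.mulVec z)) : M.PosSemidef := by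
  refine Matrix.PosSemidef.of_dotProduct_mulVec_nonneg ?_ h
  rw [Matrix.isHermitian_iff_isSymmetric, LinearMap.isSymmetric_iff_inner_map_self_real]
  intro v
  have hq := h ((WithLp.equiv 2 (m → ℂ)) v)
  have he : (inner ℂ (M.toEuclideanLin v) v : ℂ)
      = (starRingEnd ℂ) (dotProduct (star ((WithLp.equiv 2 (m → ℂ)) v))
          (M.mulVec ((WithLp.equiv 2 (m → ℂ)) v))) := by
    simp only [Matrix.toEuclideanLin_apply, PiLp.inner_apply, RCLike.inner_apply, map_sum,
      dotProduct, Pi.star_apply, WithLp.equiv_symm_apply, WithLp.equiv_apply, PiLp.toLp_apply,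
      starRingEnd_apply, star_mul', star_star]
  have hc : (starRingEnd ℂ) (dotProduct (star ((WithLp.equiv 2 (m → ℂ)) v))
          (M.mulVec ((WithLp.equiv 2 (m → ℂ)) v)))
      = dotProduct (star ((WithLp.equiv 2 (m → ℂ)) v))
          (M.mulVec ((WithLp.equiv 2 (m → ℂ)) v)) :=
    Complex.conj_eq_iff_im.mpr (Complex.nonneg_iff.mp hq).2.symm
  rw [he, hc]
  exact hc

private lemma psd_exists_conjTranspose_mul_self {n : Type} [Fintype n] [DecidableEq n]
    {A : Matrix n n ℂ} (hA : A.PosSemidef) : ∃ B : Matrix n n ℂ, A = B.conjTranspose * B := by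
  open MatrixOrder in
  have h0 : (0 : Matrix n n ℂ) ≤ A := Matrix.nonneg_iff_posSemidef.mpr hA
  open MatrixOrder in
  exact ⟨CFC.sqrt A, by
    rw [show (CFC.sqrt A).conjTranspose = CFC.sqrt A from (CFC.sqrt_nonneg A).isSelfAdjoint,
      CFC.sqrt_mul_sqrt_self A h0]⟩

private lemma link_posSemidef {ι : Type} [Fintype ι] [DecidableEq ι]
    {M M' : Matrix (ι × ι) (ι × ι) ℂ} (hM : M.PosSemidef) (hM' : M'.PosSemidef) :
    (Matrix.of fun p q : ι × ι => ∑ r : ι × ι,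
      M (p.1, r.2) (q.1, r.1) * M' (r.2, p.2) (r.1, q.2)).PosSemidef := by
  obtain ⟨B, hB⟩ := psd_exists_conjTranspose_mul_self hM
  obtain ⟨B', hB'⟩ := psd_exists_conjTranspose_mul_self hM'
  let D : Matrix ((ι × ι) × (ι × ι)) (ι × ι) ℂ :=
    Matrix.of fun kl cd => ∑ u : ι, B kl.1 (cd.1, u) * B' kl.2 (u, cd.2)
  have key : (Matrix.of fun p q : ι × ι => ∑ r : ι × ι,
      M (p.1, r.2) (q.1, r.1) * M' (r.2, p.2) (r.1, q.2)) = D.conjTranspose * D := by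
    ext p q
    rw [Matrix.mul_apply, Matrix.of_apply]
    calc
      ∑ r : ι × ι, M (p.1, r.2) (q.1, r.1) * M' (r.2, p.2) (r.1, q.2)
          = ∑ r : ι × ι, ∑ k : ι × ι, ∑ l : ι × ι,
              (star (B k (p.1, r.2)) * star (B' l (r.2, p.2)))
                * (B k (q.1, r.1) * B' l (r.1, q.2)) := by
            refine Finset.sum_congr rfl fun r _ => ?_
            rw [hB, hB', Matrix.mul_apply, Matrix.mul_apply, Finset.sum_mul_sum]
            simp only [Matrix.conjTranspose_apply]
            exact Finset.sum_congr rfl fun k _ => Finset.sum_congr rfl fun l _ => by ring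
      _ = ∑ k : ι × ι, ∑ l : ι × ι, ∑ r : ι × ι,
              (star (B k (p.1, r.2)) * star (B' l (r.2, p.2)))
                * (B k (q.1, r.1) * B' l (r.1, q.2)) := by
            rw [Finset.sum_comm]
            exact Finset.sum_congr rfl fun k _ => Finset.sum_comm
      _ = ∑ k : ι × ι, ∑ l : ι × ι,
              (∑ v : ι, star (B k (p.1, v)) * star (B' l (v, p.2)))
                * (∑ u : ι, B k (q.1, u) * B' l (u, q.2)) := by
            refine Finset.sum_congr rfl fun k _ => Finset.sum_congr rfl fun l _ => ?_
            rw [Finset.sum_mul_sum, Fintype.sum_prod_type, Finset.sum_comm]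
      _ = ∑ kl : (ι × ι) × (ι × ι), star (D kl p) * D kl q := by
            conv_rhs => rw [Fintype.sum_prod_type]
            refine Finset.sum_congr rfl fun k _ => Finset.sum_congr rfl fun l _ => ?_
            simp only [D, Matrix.of_apply, star_sum, star_mul']
      _ = ∑ kl : (ι × ι) × (ι × ι), D.conjTranspose p kl * D kl q := by
            simp only [Matrix.conjTranspose_apply]
  rw [key]
  exact Matrix.posSemidef_conjTranspose_mul_self D

private lemma sum_comm4 {ι : Type} [Fintype ι] (f : ι → ι → ι → ι → ℂ) :
    ∑ c, ∑ a, ∑ d, ∑ b, f c a d b = ∑ a, ∑ b, ∑ c, ∑ d, f c a d b :=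
  calc ∑ c, ∑ a, ∑ d, ∑ b, f c a d b
      = ∑ a, ∑ c, ∑ d, ∑ b, f c a d b := Finset.sum_comm
    _ = ∑ a, ∑ c, ∑ b, ∑ d, f c a d b :=
        Finset.sum_congr rfl fun a _ => Finset.sum_congr rfl fun c _ => Finset.sum_comm
    _ = ∑ a, ∑ b, ∑ c, ∑ d, f c a d b :=
        Finset.sum_congr rfl fun a _ => Finset.sum_comm

private lemma hasSum_nonneg_of_nonneg {α : Type} {f : α → ℂ} {a : ℂ}
    (hf : HasSum f a) (h : ∀ x, 0 ≤ f x) : 0 ≤ a :=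
  hasSum_le h hasSum_zero hf

private lemma sum_swap4 {ι : Type} [Fintype ι] (f : ι → ι → ι → ι → ℂ) :
    ∑ d, ∑ b, ∑ c, ∑ a, f d b c a = ∑ a, ∑ b, ∑ c, ∑ d, f d b c a :=
  calc ∑ d, ∑ b, ∑ c, ∑ a, f d b c a
      = ∑ b, ∑ d, ∑ c, ∑ a, f d b c a := Finset.sum_comm
    _ = ∑ b, ∑ c, ∑ d, ∑ a, f d b c a :=
        Finset.sum_congr rfl fun b _ => Finset.sum_comm
    _ = ∑ b, ∑ c, ∑ a, ∑ d, f d b c a :=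
        Finset.sum_congr rfl fun b _ => Finset.sum_congr rfl fun c _ => Finset.sum_comm
    _ = ∑ b, ∑ a, ∑ c, ∑ d, f d b c a :=
        Finset.sum_congr rfl fun b _ => Finset.sum_comm
    _ = ∑ a, ∑ b, ∑ c, ∑ d, f d b c a := Finset.sum_comm

theorem second_RP_theorem_intermediate
{Hp Hm Hmp Hpm : Type}
    [NormedAddCommGroup Hp] [InnerProductSpace ℂ Hp] [FiniteDimensional ℂ Hp]
    [NormedAddCommGroup Hm] [InnerProductSpace ℂ Hm] [FiniteDimensional ℂ Hm]
    [NormedAddCommGroup Hmp] [InnerProductSpace ℂ Hmp] [FiniteDimensional ℂ Hmp]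
    [NormedAddCommGroup Hpm] [InnerProductSpace ℂ Hpm] [FiniteDimensional ℂ Hpm]
(θ : Hp ≃ₗ⋆[ℂ] Hm)
    (hθ : ∀ x x' : Hp, ⟪x, x'⟫ = ⟪θ x', θ x⟫)
(tmp : Hm →ₗ[ℂ] Hp →ₗ[ℂ] Hmp) (tpm : Hp →ₗ[ℂ] Hm →ₗ[ℂ] Hpm)
    (htmp : ∀ (y : Hm) (x : Hp) (y' : Hm) (x' : Hp),
      ⟪tmp y x, tmp y' x'⟫ = ⟪y, y'⟫ * ⟪x, x'⟫)
    (htpm : ∀ (x : Hp) (y : Hm) (x' : Hp) (y' : Hm),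
      ⟪tpm x y, tpm x' y'⟫ = ⟪x, x'⟫ * ⟪y, y'⟫)
    (hmp_span : ⊤ ≤ Submodule.span ℂ (Set.range fun p : Hm × Hp => tmp p.1 p.2))
    (hpm_span : ⊤ ≤ Submodule.span ℂ (Set.range fun p : Hp × Hm => tpm p.1 p.2))
(Fs : (Hmp →L[ℂ] Hmp) → (Hpm →L[ℂ] Hpm))
    (hFs : ∀ (T : Hmp →L[ℂ] Hmp) (x x' : Hp) (y y' : Hm),
      ⟪tpm x y, Fs T (tpm x' y')⟫ = ⟪tmp (θ x') x, T (tmp y' (θ.symm y))⟫)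
(Θ : Hmp →ₛₗ[starRingEnd ℂ] Hmp)
    (hΘ : ∀ (y : Hm) (x : Hp), Θ (tmp y x) = tmp (θ x) (θ.symm y))
    (H H0 Hplus Hminus : Hmp →L[ℂ] Hmp) (lam : ℝ) (H'p : Hp →L[ℂ] Hp)
    (hHplus : ∀ (y : Hm) (x : Hp), Hplus (tmp y x) = tmp y (H'p x))
    (hHminus : ∀ v : Hmp, Hminus v = Θ (Hplus (Θ v)))
    (hdecomp : H = Hminus + H0 + Hplus + (lam : ℂ) • 1)
    (hpos : ∀ w : Hpm, 0 ≤ ⟪w, Fs (-H0) w⟫) :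
    ∀ s : ℝ, 0 < s → ∀ (x x' : Hp) (β : ℝ), 0 ≤ β →
      0 ≤ ⟪tmp (θ x') x',
        NormedSpace.exp ((-β : ℂ) • H + ((s * β : ℝ) : ℂ) • (Hminus ∘L Hplus))
          (tmp (θ x) x)⟫ := by
  intro s hs x x' β hβ
  classical
  -- orthonormal bases
  set e : OrthonormalBasis (Fin (Module.finrank ℂ Hp)) ℂ Hp := stdOrthonormalBasis ℂ Hp with he
  set ι := Fin (Module.finrank ℂ Hp) with hιdef
  have hee : ∀ i j : ι, (⟪e i, e j⟫ : ℂ) = if i = j then 1 else 0 :=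
    orthonormal_iff_ite.mp e.orthonormal
  set g : ι × ι → Hmp := fun r => tmp (θ (e r.1)) (e r.2) with hgdef
  have hgg : ∀ p q : ι × ι, (⟪g p, g q⟫ : ℂ)
      = (if q.1 = p.1 then 1 else 0) * (if p.2 = q.2 then 1 else 0) := by
    intro p q
    calc (⟪tmp (θ (e p.1)) (e p.2), tmp (θ (e q.1)) (e q.2)⟫ : ℂ)
        = ⟪θ (e p.1), θ (e q.1)⟫ * ⟪e p.2, e q.2⟫ := htmp _ _ _ _
      _ = ⟪e q.1, e p.1⟫ * ⟪e p.2, e q.2⟫ := by rw [← hθ]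
      _ = _ := by rw [hee, hee]
  have hgon : Orthonormal ℂ g := by
    rw [orthonormal_iff_ite]
    intro p q
    rw [hgg]
    by_cases h1 : p = q
    · subst h1; simp
    · rw [if_neg h1]
      by_cases h2 : q.1 = p.1
      · rw [if_pos h2, if_neg fun h3 => h1 (Prod.ext h2.symm h3), one_mul]
      · rw [if_neg h2, zero_mul]
  have hgspan : ⊤ ≤ Submodule.span ℂ (Set.range g) := by
    refine le_trans hmp_span (Submodule.span_le.mpr ?_)
    rintro w ⟨⟨y, xx⟩, rfl⟩
    have hy : (tmp y) xx = ∑ i : ι, ∑ j : ι,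
        ((starRingEnd ℂ) ⟪e i, θ.symm y⟫ * ⟪e j, xx⟫) • g (i, j) := by
      conv_lhs => rw [← θ.apply_symm_apply y, ← e.sum_repr' (θ.symm y), ← e.sum_repr' xx]
      rw [map_sum]
      simp only [map_smulₛₗ, map_sum, LinearMap.coe_sum, Finset.sum_apply,
        LinearMap.smul_apply, map_smul, smul_smul, hgdef]
      simp only [RingHom.id_apply, Finset.smul_sum, smul_smul]
      rw [Finset.sum_comm]
      exact Finset.sum_congr rfl fun i _ => Finset.sum_congr rfl fun j _ => by rw [mul_comm]
    show (tmp y) xx ∈ (Submodule.span ℂ (Set.range g) : Submodule ℂ Hmp)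
    rw [hy]
    exact Submodule.sum_mem _ fun i _ => Submodule.sum_mem _ fun j _ =>
      Submodule.smul_mem _ _ (Submodule.subset_span ⟨(i, j), rfl⟩)
  let gONB : OrthonormalBasis (ι × ι) ℂ Hmp := OrthonormalBasis.mk hgon hgspan
  have hco : ⇑gONB = g := OrthonormalBasis.coe_mk hgon hgspan
  have hres : ∀ w : Hmp, w = ∑ r : ι × ι, (⟪g r, w⟫ : ℂ) • g r := by
    intro w
    conv_lhs => rw [← gONB.sum_repr' w]
    simp only [hco]
  -- the matrix of the string Fourier transform
  set mat : (Hmp →L[ℂ] Hmp) → Matrix (ι × ι) (ι × ι) ℂ :=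
    fun T => Matrix.of fun p q : ι × ι => (⟪g (q.1, p.1), T (g (q.2, p.2))⟫ : ℂ) with hmat
  set S : (Hmp →L[ℂ] Hmp) → Prop :=
    fun T => ∀ z : ι × ι → ℂ, 0 ≤ dotProduct (star z) ((mat T).mulVec z) with hS
  have mat_apply : ∀ (T : Hmp →L[ℂ] Hmp) (p q : ι × ι),
      mat T p q = (⟪g (q.1, p.1), T (g (q.2, p.2))⟫ : ℂ) := fun T p q => rfl
  -- linearity of mat
  have mat_add : ∀ T T' : Hmp →L[ℂ] Hmp, mat (T + T') = mat T + mat T' := by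
    intro T T'
    ext p q
    simp [mat_apply, inner_add_right]
  have mat_smul : ∀ (c : ℂ) (T : Hmp →L[ℂ] Hmp), mat (c • T) = c • mat T := by
    intro c T
    ext p q
    simp [mat_apply, inner_smul_right]
  -- multiplicativity (link product)
  have mat_mul : ∀ T T' : Hmp →L[ℂ] Hmp, mat (T * T')
      = Matrix.of fun p q : ι × ι => ∑ r : ι × ι,
          mat T (p.1, r.2) (q.1, r.1) * mat T' (r.2, p.2) (r.1, q.2) := by
    intro T T'
    ext p q
    rw [Matrix.of_apply, mat_apply, ContinuousLinearMap.mul_apply]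
    conv_lhs => rw [hres (T' (g (q.2, p.2)))]
    rw [map_sum, inner_sum]
    simp only [map_smul, inner_smul_right]
    refine Finset.sum_congr rfl fun r _ => ?_
    rw [mat_apply, mat_apply]
    simp only [Prod.mk.eta]
    ring
  -- S is closed under the cone operations
  have S_add : ∀ T T' : Hmp →L[ℂ] Hmp, S T → S T' → S (T + T') := by
    intro T T' h h' z
    rw [mat_add, Matrix.add_mulVec, dotProduct_add]
    exact add_nonneg (h z) (h' z)
  have S_smul : ∀ (c : ℂ) (T : Hmp →L[ℂ] Hmp), 0 ≤ c → S T → S (c • T) := by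
    intro c T hc h z
    rw [mat_smul, Matrix.smul_mulVec, dotProduct_smul, smul_eq_mul]
    exact mul_nonneg hc (h z)
  have S_mul : ∀ T T' : Hmp →L[ℂ] Hmp, S T → S T' → S (T * T') := by
    intro T T' h h' z
    have hpsd : (mat (T * T')).PosSemidef := by
      rw [mat_mul]
      exact link_posSemidef (posSemidef_of_quadform _ h) (posSemidef_of_quadform _ h')
    exact hpsd.dotProduct_mulVec_nonneg z
  have S_rankone : ∀ (T : Hmp →L[ℂ] Hmp) (K : ι × ι → ℂ),
      (∀ p q, mat T p q = (starRingEnd ℂ) (K q) * K p) → S T := by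
    intro T K hK z
    have hfact : dotProduct (star z) ((mat T).mulVec z)
        = (∑ p, (starRingEnd ℂ) (z p) * K p)
            * (starRingEnd ℂ) (∑ p, (starRingEnd ℂ) (z p) * K p) := by
      rw [quad_rewrite, map_sum, Finset.sum_mul_sum]
      refine Finset.sum_congr rfl fun p _ => Finset.sum_congr rfl fun q _ => ?_
      rw [hK]
      simp only [map_mul, Complex.conj_conj]
      ring
    rw [hfact, Complex.mul_conj]
    exact Complex.zero_le_real.mpr (Complex.normSq_nonneg _)
  have S_one : S (1 : Hmp →L[ℂ] Hmp) := by
    refine S_rankone _ (fun p => (⟪e p.1, e p.2⟫ : ℂ)) fun p q => ?_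
    rw [mat_apply, ContinuousLinearMap.one_apply, hgg]
    simp only [inner_conj_symm, hee]
    simp [apply_ite (starRingEnd ℂ), eq_comm]
  -- the operators A₋, A₊
  set Ap : Hmp →L[ℂ] Hmp := 1 - (s : ℂ) • Hplus with hApdef
  set Am : Hmp →L[ℂ] Hmp := 1 - (s : ℂ) • Hminus with hAmdef
  have hHminus' : ∀ (y : Hm) (ξ : Hp), Hminus (tmp y ξ) = tmp (θ (H'p (θ.symm y))) ξ := by
    intro y ξ
    rw [hHminus, hΘ, hHplus, hΘ, θ.symm_apply_apply]
  have hAmAp : ∀ d b : ι, (Am * Ap) (g (d, b))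
      = tmp (θ (e d - (s : ℂ) • H'p (e d))) (e b - (s : ℂ) • H'p (e b)) := by
    intro d b
    have h1 : Ap (g (d, b)) = tmp (θ (e d)) (e b - (s : ℂ) • H'p (e b)) := by
      rw [hApdef, hgdef]
      simp only [ContinuousLinearMap.sub_apply, ContinuousLinearMap.one_apply,
        ContinuousLinearMap.smul_apply, hHplus, map_sub, map_smul, RingHom.id_apply]
    rw [ContinuousLinearMap.mul_apply, h1, hAmdef]
    simp only [ContinuousLinearMap.sub_apply, ContinuousLinearMap.one_apply,
      ContinuousLinearMap.smul_apply, hHminus', θ.symm_apply_apply]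
    simp only [map_sub, map_smulₛₗ, Complex.conj_ofReal, LinearMap.sub_apply,
      LinearMap.smul_apply, map_smul, RingHom.id_apply]
    module
  have S_AmAp : S (Am * Ap) := by
    refine S_rankone _ (fun p => (⟪e p.1, e p.2 - (s : ℂ) • H'p (e p.2)⟫ : ℂ)) fun p q => ?_
    rw [mat_apply, hAmAp, htmp, ← hθ, ← inner_conj_symm]
  -- S(-H₀) from the positivity hypothesis
  have S_negH0 : S (-H0) := by
    intro z
    set w : Hpm := ∑ p : ι × ι, z p • (tpm (e p.1)) (θ (e p.2)) with hw
    have hkey : dotProduct (star z) ((mat (-H0)).mulVec z) = ⟪w, Fs (-H0) w⟫ := by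
      rw [quad_rewrite, hw]
      rw [map_sum]
      simp only [inner_sum, sum_inner, inner_smul_left, inner_smul_right, map_smul,
        Finset.mul_sum]
      rw [Finset.sum_comm]
      refine Finset.sum_congr rfl fun a _ => Finset.sum_congr rfl fun b _ => ?_
      rw [hFs, θ.symm_apply_apply]
      rw [show ((⟪(tmp (θ (e a.1))) (e b.1), (-H0) ((tmp (θ (e a.2))) (e b.2))⟫ : ℂ))
        = mat (-H0) b a from rfl]
      ring
    rw [hkey]
    exact hpos w
  -- the two positive generators
  set P : Hmp →L[ℂ] Hmp := (β : ℂ) • (-H0) with hPdef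
  set Q : Hmp →L[ℂ] Hmp := ((β / s : ℝ) : ℂ) • (Am * Ap) with hQdef
  have S_P : S P := S_smul _ _ (Complex.zero_le_real.mpr hβ) S_negH0
  have S_Q : S Q := S_smul _ _ (Complex.zero_le_real.mpr (div_nonneg hβ hs.le)) S_AmAp
  have S_pow : ∀ n : ℕ, S ((P + Q) ^ n) := by
    intro n
    induction n with
    | zero => rw [pow_zero]; exact S_one
    | succ n ih =>
        rw [pow_succ, mul_add]
        exact S_add _ _ (S_mul _ _ ih S_P) (S_mul _ _ ih S_Q)
  have S_exp : S (NormedSpace.exp (P + Q)) := by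
    intro z
    let philin : (Hmp →L[ℂ] Hmp) →ₗ[ℂ] ℂ :=
      { toFun := fun T => dotProduct (star z) ((mat T).mulVec z)
        map_add' := fun T T' => by
          simp only [mat_add, Matrix.add_mulVec, dotProduct_add]
        map_smul' := fun c T => by
          simp only [mat_smul, Matrix.smul_mulVec, dotProduct_smul,
            RingHom.id_apply, smul_eq_mul] }
    let phi : (Hmp →L[ℂ] Hmp) →L[ℂ] ℂ := LinearMap.toContinuousLinearMap philin
    have hphi : ∀ T, phi T = dotProduct (star z) ((mat T).mulVec z) := fun T => rfl
    have hsum : HasSum (fun n : ℕ => ((n.factorial : ℂ))⁻¹ • (P + Q) ^ n)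
        (NormedSpace.exp (P + Q)) := NormedSpace.exp_series_hasSum_exp' (𝕂 := ℂ) (P + Q)
    have h2 := hsum.mapL phi
    have h3 : ∀ n : ℕ, 0 ≤ phi (((n.factorial : ℂ))⁻¹ • (P + Q) ^ n) := fun n => by
      rw [hphi]
      refine S_smul _ _ ?_ (S_pow n) z
      rw [show ((n.factorial : ℂ)) = (((n.factorial : ℝ)) : ℂ) from by norm_cast,
        ← Complex.ofReal_inv]
      exact Complex.zero_le_real.mpr (inv_nonneg.mpr (Nat.cast_nonneg _))
    have h4 : 0 ≤ phi (NormedSpace.exp (P + Q)) := hasSum_nonneg_of_nonneg h2 h3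
    rw [hphi] at h4
    exact h4
  -- the exponent decomposition
  have hAmApExpand : Am * Ap
      = 1 - (s : ℂ) • Hplus - (s : ℂ) • Hminus + ((s : ℂ) * (s : ℂ)) • (Hminus * Hplus) := by
    rw [hAmdef, hApdef]
    simp only [mul_sub, sub_mul, one_mul, mul_one, smul_mul_assoc, mul_smul_comm, smul_smul]
    module
  have hXdecomp : (-β : ℂ) • H + ((s * β : ℝ) : ℂ) • (Hminus ∘L Hplus)
      = ((-β * lam - β / s : ℝ) : ℂ) • (1 : Hmp →L[ℂ] Hmp) + (P + Q) := by
    have hsne : (s : ℂ) ≠ 0 := Complex.ofReal_ne_zero.mpr hs.ne'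
    rw [← ContinuousLinearMap.mul_def Hminus Hplus, hdecomp, hPdef, hQdef, hAmApExpand]
    push_cast
    match_scalars <;> (field_simp [hsne]; try ring)
  have hexpX : NormedSpace.exp ((-β : ℂ) • H + ((s * β : ℝ) : ℂ) • (Hminus ∘L Hplus))
      = ((Real.exp (-β * lam - β / s) : ℝ) : ℂ) • NormedSpace.exp (P + Q) := by
    rw [hXdecomp, NormedSpace.exp_add_of_commute_of_mem_ball (𝕂 := ℂ) ((Commute.one_left (P + Q)).smul_left _)
      ((NormedSpace.expSeries_radius_eq_top ℂ (Hmp →L[ℂ] Hmp)).symm ▸ edist_lt_top _ _)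
      ((NormedSpace.expSeries_radius_eq_top ℂ (Hmp →L[ℂ] Hmp)).symm ▸ edist_lt_top _ _)]
    have h1 : ((-β * lam - β / s : ℝ) : ℂ) • (1 : Hmp →L[ℂ] Hmp)
        = algebraMap ℂ (Hmp →L[ℂ] Hmp) ((-β * lam - β / s : ℝ) : ℂ) :=
      (Algebra.algebraMap_eq_smul_one _).symm
    rw [h1, ← NormedSpace.algebraMap_exp_comm, Algebra.algebraMap_eq_smul_one, smul_mul_assoc,
      one_mul, ← Complex.exp_eq_exp_ℂ, ← Complex.ofReal_exp]
  have S_final : S (NormedSpace.exp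
      ((-β : ℂ) • H + ((s * β : ℝ) : ℂ) • (Hminus ∘L Hplus))) := by
    rw [hexpX]
    exact S_smul _ _ (Complex.zero_le_real.mpr (Real.exp_pos _).le) S_exp
  -- expansion of the boundary vectors
  have expand : ∀ w : Hp, (tmp (θ w)) w = ∑ r : ι × ι,
      ((starRingEnd ℂ) (⟪e r.1, w⟫ : ℂ) * (⟪e r.2, w⟫ : ℂ)) • g r := by
    intro w
    calc (tmp (θ w)) w
        = (tmp (θ (∑ i, (⟪e i, w⟫ : ℂ) • e i))) (∑ j, (⟪e j, w⟫ : ℂ) • e j) := by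
          rw [e.sum_repr' w]
      _ = ∑ j, ∑ i, ((starRingEnd ℂ) (⟪e i, w⟫ : ℂ) * (⟪e j, w⟫ : ℂ)) • (tmp (θ (e i))) (e j) := by
          rw [map_sum]
          simp only [map_smulₛₗ, map_sum, LinearMap.coe_sum, Finset.sum_apply,
            LinearMap.smul_apply, map_smul, smul_smul, RingHom.id_apply, Finset.smul_sum]
          exact Finset.sum_congr rfl fun j _ => Finset.sum_congr rfl fun i _ => by
            rw [mul_comm]
      _ = ∑ i, ∑ j, ((starRingEnd ℂ) (⟪e i, w⟫ : ℂ) * (⟪e j, w⟫ : ℂ)) • g (i, j) := by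
          rw [Finset.sum_comm]
      _ = ∑ r : ι × ι, ((starRingEnd ℂ) (⟪e r.1, w⟫ : ℂ) * (⟪e r.2, w⟫ : ℂ)) • g r := by
          conv_rhs => rw [Fintype.sum_prod_type]
  -- the final test vector
  set E : Hmp →L[ℂ] Hmp := NormedSpace.exp
      ((-β : ℂ) • H + ((s * β : ℝ) : ℂ) • (Hminus ∘L Hplus)) with hEdef
  set u : ι → ℂ := fun i => (⟪e i, x⟫ : ℂ) with hu
  set v : ι → ℂ := fun i => (⟪e i, x'⟫ : ℂ) with hv
  set z : ι × ι → ℂ := fun q => v q.1 * (starRingEnd ℂ) (u q.2) with hz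
  have final_eq : (⟪(tmp (θ x')) x', E ((tmp (θ x)) x)⟫ : ℂ)
      = dotProduct (star z) ((mat E).mulVec z) := by
    rw [expand x, expand x', quad_rewrite]
    rw [map_sum]
    simp only [inner_sum, sum_inner, inner_smul_left, inner_smul_right, map_mul,
      Complex.conj_conj, map_smul, Finset.mul_sum]
    conv_lhs =>
      rw [Fintype.sum_prod_type]
      enter [2, d, 2, b]
      rw [Fintype.sum_prod_type]
    conv_rhs =>
      rw [Fintype.sum_prod_type]
      enter [2, a, 2, b]
      rw [Fintype.sum_prod_type]
    rw [sum_swap4]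
    refine Finset.sum_congr rfl fun a _ => Finset.sum_congr rfl fun b _ => ?_
    refine Finset.sum_congr rfl fun c _ => Finset.sum_congr rfl fun d _ => ?_
    simp only [hz, hu, hv, mat_apply, map_mul, Complex.conj_conj]
    ring
  rw [final_eq]
  exact S_final z
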